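/- Fix $y \in (-2,2)$ and $x \in \mathbb{R}$, and let $t$ be the inverse of the semicircle cumulative distribution function $F$. For each $n$, set $i_n = n F(y) - x\sqrt{\tfrac{1}{2\pi^2}\log n}$. Then, as $n \to \infty$, $t(i_n/n) = y - x\sqrt{\frac{2}{4 - y^2}} \cdot \frac{\sqrt{\log n}}{n} + o\big(\frac{\sqrt{\log n}}{n}\big)$; consequently $x_n := \sqrt{\frac{4 - t(i_n/n)^2}{2}} \cdot \frac{y - t(i_n/n)}{\sqrt{\log n}/n} \to x$. -/

import Mathlib

open MeasureTheory ProbabilityTheory Matrix Filter Asymptotics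

noncomputable section

instance matrixMeasurableSpace {m n α : Type*} [MeasurableSpace α] :
    MeasurableSpace (Matrix m n α) :=
  inferInstanceAs (MeasurableSpace (m → n → α))

/-- The number of eigenvalues (with multiplicity) of a Hermitian matrix `A` lying in the set `I`
(junk value `0` if `A` is not Hermitian). -/
def eigCount {𝕜 : Type*} [RCLike 𝕜] {n : ℕ} (A : Matrix (Fin n) (Fin n) 𝕜) (I : Set ℝ) : ℕ :=
  if h : A.IsHermitian then Nat.card {i : Fin n // h.eigenvalues i ∈ I} else 0

/-- The `i`-th smallest eigenvalue (0-based) of a Hermitian matrix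
(junk value `0` if `A` is not Hermitian). -/
def sortedEig {𝕜 : Type*} [RCLike 𝕜] {n : ℕ} (A : Matrix (Fin n) (Fin n) 𝕜) (i : Fin n) : ℝ :=
  if h : A.IsHermitian then (h.eigenvalues ∘ Tuple.sort h.eigenvalues) i else 0

/-- The `k`-th smallest eigenvalue, 1-based indexing, with junk value `0` out of range. -/
def eigVal {𝕜 : Type*} [RCLike 𝕜] {n : ℕ} (A : Matrix (Fin n) (Fin n) 𝕜) (k : ℕ) : ℝ :=
  if h : k - 1 < n then sortedEig A ⟨k - 1, h⟩ else 0

/-- The matrix `A / √n` where `n` is the size of `A`. -/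
def scaled {𝕜 : Type*} [RCLike 𝕜] {n : ℕ} (A : Matrix (Fin n) (Fin n) 𝕜) :
    Matrix (Fin n) (Fin n) 𝕜 :=
  ((Real.sqrt n)⁻¹ : ℝ) • A

/-- The semicircle measure of a set `I ⊆ ℝ`. -/
def semicircle (I : Set ℝ) : ℝ :=
  ∫ x in I ∩ Set.Icc (-2 : ℝ) 2, Real.sqrt (4 - x ^ 2) / (2 * Real.pi)

/-- The cumulative distribution function of the semicircle law. -/
def scCDF (u : ℝ) : ℝ :=
  ∫ s in (-2 : ℝ)..u, Real.sqrt (4 - s ^ 2) / (2 * Real.pi)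

/-- The classical location `t(x)`, the inverse of the semicircle CDF on `[-2,2]`. -/
def tLoc (x : ℝ) : ℝ :=
  sInf {u : ℝ | u ∈ Set.Icc (-2 : ℝ) 2 ∧ x ≤ scCDF u}

/-- The standard Gaussian cumulative distribution function. -/
def stdGaussCDF (x : ℝ) : ℝ :=
  ((gaussianReal 0 1) (Set.Iic x)).toReal

/-- A sequence of real random variables converges in distribution to the standard Gaussian law
`N(0,1)` (stated via pointwise convergence of the cumulative distribution functions, which is
equivalent since the Gaussian CDF is continuous). -/
def TendstoStdGaussian {Ω : Type*} [MeasureSpace Ω] (X : ℕ → Ω → ℝ) : Prop :=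
  ∀ x : ℝ, Tendsto (fun n => (ℙ {ω | X n ω ≤ x}).toReal) atTop (nhds (stdGaussCDF x))

/-- A real random variable has exponential decay. -/
def ExpDecay {Ω : Type*} [MeasureSpace Ω] (ξ : Ω → ℝ) : Prop :=
  ∃ C C' : ℝ, 0 < C ∧ 0 < C' ∧
    ∀ t : ℝ, C' ≤ t → ℙ {ω | t ^ C ≤ |ξ ω|} ≤ ENNReal.ofReal (Real.exp (-t))

/-- Condition (C0) for a complex random matrix: the real and imaginary parts of every entry are
independent and have exponential decay. -/
def CondC0 {Ω : Type*} [MeasureSpace Ω] {n : ℕ} (M : Ω → Matrix (Fin n) (Fin n) ℂ) : Prop :=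
  ∀ i j : Fin n,
    IndepFun (fun ω => (M ω i j).re) (fun ω => (M ω i j).im) ℙ ∧
    ExpDecay (fun ω => (M ω i j).re) ∧ ExpDecay (fun ω => (M ω i j).im)

/-- Condition (C0) for a real random matrix: every entry has exponential decay. -/
def CondC0Real {Ω : Type*} [MeasureSpace Ω] {n : ℕ} (M : Ω → Matrix (Fin n) (Fin n) ℝ) : Prop :=
  ∀ i j : Fin n, ExpDecay (fun ω => M ω i j)

/-- Index type for the independent real entries of a Hermitian random matrix: real and imaginary
parts of the above-diagonal entries, and (real) diagonal entries. -/
def WignerIndex (n : ℕ) : Type :=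
  {q : (Fin n × Fin n) × Bool // q.1.1 < q.1.2 ∨ (q.1.1 = q.1.2 ∧ q.2 = true)}

/-- The real/imaginary part (according to the boolean: `true` = real part) of an entry of a
complex random matrix. -/
def entryRV {Ω : Type*} {n : ℕ} (M : Ω → Matrix (Fin n) (Fin n) ℂ)
    (q : (Fin n × Fin n) × Bool) (ω : Ω) : ℝ :=
  if q.2 then (M ω q.1.1 q.1.2).re else (M ω q.1.1 q.1.2).im

/-- `M` is a GUE random matrix: Hermitian, for `i < j` the real and imaginary parts of the
`(i,j)` entry are iid centered Gaussians of variance `1/2`, the diagonal entries are iid centered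
Gaussians of variance `1`, and all these real entries are independent. -/
def IsGUE {Ω : Type*} [MeasureSpace Ω] {n : ℕ} (M : Ω → Matrix (Fin n) (Fin n) ℂ) : Prop :=
  (∀ ω, (M ω).IsHermitian) ∧
  (∀ i j : Fin n, Measurable fun ω => M ω i j) ∧
  (∀ i j : Fin n, i < j →
      Measure.map (fun ω => (M ω i j).re) ℙ = gaussianReal 0 (1/2) ∧
      Measure.map (fun ω => (M ω i j).im) ℙ = gaussianReal 0 (1/2)) ∧
  (∀ i : Fin n, Measure.map (fun ω => (M ω i i).re) ℙ = gaussianReal 0 1) ∧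
  iIndepFun (fun q : WignerIndex n => entryRV M q.1) ℙ

/-- `M` is a (complex Hermitian) Wigner random matrix: Hermitian, for `i < j` the real and
imaginary parts of the `(i,j)` entry are iid with mean `0` and variance `1/2`, the diagonal
entries are iid with mean `0` and variance `1`, and all these real entries are independent. -/
def IsWigner {Ω : Type*} [MeasureSpace Ω] {n : ℕ} (M : Ω → Matrix (Fin n) (Fin n) ℂ) : Prop :=
  (∀ ω, (M ω).IsHermitian) ∧
  (∀ i j : Fin n, Measurable fun ω => M ω i j) ∧
  (∃ μ : Measure ℝ, IsProbabilityMeasure μ ∧ (∫ x, x ∂μ) = 0 ∧ (∫ x, x ^ 2 ∂μ) = 1/2 ∧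
    ∀ i j : Fin n, i < j →
      Measure.map (fun ω => (M ω i j).re) ℙ = μ ∧
      Measure.map (fun ω => (M ω i j).im) ℙ = μ) ∧
  (∃ ν : Measure ℝ, IsProbabilityMeasure ν ∧ (∫ x, x ∂ν) = 0 ∧ (∫ x, x ^ 2 ∂ν) = 1 ∧
    ∀ i : Fin n, Measure.map (fun ω => (M ω i i).re) ℙ = ν) ∧
  iIndepFun (fun q : WignerIndex n => entryRV M q.1) ℙ

/-- Index type for the independent entries of a real symmetric random matrix. -/
def SymIndex (n : ℕ) : Type :=
  {q : Fin n × Fin n // q.1 ≤ q.2}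

/-- `M` is a GOE random matrix: symmetric, the above-diagonal entries are iid centered Gaussians
of variance `1`, the diagonal entries are iid centered Gaussians of variance `2`, and all these
entries are independent. -/
def IsGOE {Ω : Type*} [MeasureSpace Ω] {n : ℕ} (M : Ω → Matrix (Fin n) (Fin n) ℝ) : Prop :=
  (∀ ω, (M ω).IsHermitian) ∧
  (∀ i j : Fin n, Measurable fun ω => M ω i j) ∧
  (∀ i j : Fin n, i < j → Measure.map (fun ω => M ω i j) ℙ = gaussianReal 0 1) ∧
  (∀ i : Fin n, Measure.map (fun ω => M ω i i) ℙ = gaussianReal 0 2) ∧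
  iIndepFun (fun q : SymIndex n => fun ω => M ω q.1.1 q.1.2) ℙ

/-- `M` is a real symmetric Wigner random matrix: symmetric, the above-diagonal entries are iid
with mean `0` and variance `1`, the diagonal entries are iid with mean `0` and variance `2`, and
all these entries are independent. -/
def IsWignerReal {Ω : Type*} [MeasureSpace Ω] {n : ℕ} (M : Ω → Matrix (Fin n) (Fin n) ℝ) : Prop :=
  (∀ ω, (M ω).IsHermitian) ∧
  (∀ i j : Fin n, Measurable fun ω => M ω i j) ∧
  (∃ μ : Measure ℝ, IsProbabilityMeasure μ ∧ (∫ x, x ∂μ) = 0 ∧ (∫ x, x ^ 2 ∂μ) = 1 ∧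
    ∀ i j : Fin n, i < j → Measure.map (fun ω => M ω i j) ℙ = μ) ∧
  (∃ ν : Measure ℝ, IsProbabilityMeasure ν ∧ (∫ x, x ∂ν) = 0 ∧ (∫ x, x ^ 2 ∂ν) = 2 ∧
    ∀ i : Fin n, Measure.map (fun ω => M ω i i) ℙ = ν) ∧
  iIndepFun (fun q : SymIndex n => fun ω => M ω q.1.1 q.1.2) ℙ

/-- The corresponding entries of two complex random matrices have equal joint moments
`E[Re^m Im^l]` for all `m + l ≤ k`. -/
def MomentsMatch {Ω Ω' : Type*} [MeasureSpace Ω] [MeasureSpace Ω'] {n : ℕ} (k : ℕ)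
    (M : Ω → Matrix (Fin n) (Fin n) ℂ) (M' : Ω' → Matrix (Fin n) (Fin n) ℂ) : Prop :=
  ∀ i j : Fin n, ∀ m l : ℕ, m + l ≤ k →
    (∫ ω, (M ω i j).re ^ m * (M ω i j).im ^ l ∂ℙ) =
      ∫ ω, (M' ω i j).re ^ m * (M' ω i j).im ^ l ∂ℙ

/-- The corresponding entries of two real random matrices have equal moments up to order `k`. -/
def MomentsMatchReal {Ω Ω' : Type*} [MeasureSpace Ω] [MeasureSpace Ω'] {n : ℕ} (k : ℕ)
    (M : Ω → Matrix (Fin n) (Fin n) ℝ) (M' : Ω' → Matrix (Fin n) (Fin n) ℝ) : Prop :=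
  ∀ i j : Fin n, ∀ m : ℕ, m ≤ k →
    (∫ ω, (M ω i j) ^ m ∂ℙ) = ∫ ω, (M' ω i j) ^ m ∂ℙ

/-- The entries of `M` match the corresponding entries of GUE up to order `4`. -/
def MatchesGUE4 {Ω : Type*} [MeasureSpace Ω] {n : ℕ}
    (M : Ω → Matrix (Fin n) (Fin n) ℂ) : Prop :=
  ∃ (Ω' : Type) (_ : MeasureSpace Ω') (M' : Ω' → Matrix (Fin n) (Fin n) ℂ),
    IsProbabilityMeasure (ℙ : Measure Ω') ∧ IsGUE M' ∧ MomentsMatch 4 M M'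

/-- The entries of `M` match the corresponding entries of GOE up to order `4`. -/
def MatchesGOE4 {Ω : Type*} [MeasureSpace Ω] {n : ℕ}
    (M : Ω → Matrix (Fin n) (Fin n) ℝ) : Prop :=
  ∃ (Ω' : Type) (_ : MeasureSpace Ω') (M' : Ω' → Matrix (Fin n) (Fin n) ℝ),
    IsProbabilityMeasure (ℙ : Measure Ω') ∧ IsGOE M' ∧ MomentsMatchReal 4 M M'

end

noncomputable def scF : ℝ → ℝ := fun s => Real.sqrt (4 - s ^ 2) / (2 * Real.pi)

noncomputable def scCDF' (u : ℝ) : ℝ := ∫ s in (-2 : ℝ)..u, scF s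

lemma scF_cont : Continuous scF :=
  ((continuous_const.sub (continuous_pow 2)).sqrt).div_const _

lemma scF_nonneg (s : ℝ) : 0 ≤ scF s :=
  div_nonneg (Real.sqrt_nonneg _) (by positivity)

lemma scF_pos {s : ℝ} (hs : s ∈ Set.Ioo (-2 : ℝ) 2) : 0 < scF s := by
  apply div_pos
  · apply Real.sqrt_pos.2; nlinarith [hs.1, hs.2]
  · positivity

lemma scCDF_hasDerivAt (u : ℝ) : HasDerivAt scCDF' (scF u) u :=
  intervalIntegral.integral_hasDerivAt_right (scF_cont.intervalIntegrable _ _)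
    (scF_cont.stronglyMeasurableAtFilter _ _) scF_cont.continuousAt

lemma scCDF_cont : Continuous scCDF' :=
  continuous_iff_continuousAt.2 fun u => (scCDF_hasDerivAt u).continuousAt

lemma scCDF_add (a b : ℝ) : scCDF' b = scCDF' a + ∫ s in a..b, scF s := by
  unfold scCDF'
  rw [intervalIntegral.integral_add_adjacent_intervals (scF_cont.intervalIntegrable _ _)
    (scF_cont.intervalIntegrable _ _)]

lemma scCDF_mono : Monotone scCDF' := by
  intro a b hab
  rw [scCDF_add a b]
  have : 0 ≤ ∫ s in a..b, scF s :=
    intervalIntegral.integral_nonneg hab fun s _ => scF_nonneg s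
  linarith

lemma scCDF_strictMonoOn : StrictMonoOn scCDF' (Set.Icc (-2 : ℝ) 2) := by
  intro a ha b hb hab
  rw [scCDF_add a b]
  have : 0 < ∫ s in a..b, scF s :=
    intervalIntegral.intervalIntegral_pos_of_pos_on (scF_cont.intervalIntegrable _ _)
      (fun s hs => scF_pos ⟨lt_of_le_of_lt ha.1 hs.1, lt_of_lt_of_le hs.2 hb.2⟩) hab
  linarith

lemma scCDF_neg_two : scCDF' (-2) = 0 := intervalIntegral.integral_same

noncomputable def tLoc' (x : ℝ) : ℝ :=
  sInf {u : ℝ | u ∈ Set.Icc (-2 : ℝ) 2 ∧ x ≤ scCDF' u}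

lemma tLoc_scCDF {u : ℝ} (hu : u ∈ Set.Icc (-2 : ℝ) 2) : tLoc' (scCDF' u) = u := by
  unfold tLoc'
  apply le_antisymm
  · have hmem : u ∈ {w : ℝ | w ∈ Set.Icc (-2:ℝ) 2 ∧ scCDF' u ≤ scCDF' w} := ⟨hu, le_rfl⟩
    refine csInf_le ⟨-2, ?_⟩ hmem
    rintro w ⟨hw, -⟩
    exact hw.1
  · apply le_csInf ⟨u, show _ ∈ Set.Icc (-2:ℝ) 2 ∧ _ from ⟨hu, le_rfl⟩⟩
    rintro w ⟨hw, hle⟩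
    by_contra h
    push_neg at h
    exact absurd hle (not_le.2 (scCDF_strictMonoOn hw hu h))

lemma scCDF_inv_spec {v : ℝ} (h0 : 0 ≤ v) (h2 : v ≤ scCDF' 2) :
    tLoc' v ∈ Set.Icc (-2 : ℝ) 2 ∧ scCDF' (tLoc' v) = v := by
  have : v ∈ Set.Icc (scCDF' (-2)) (scCDF' 2) := by rw [scCDF_neg_two]; exact ⟨h0, h2⟩
  obtain ⟨u, hu, hFu⟩ := intermediate_value_Icc (by norm_num : (-2:ℝ) ≤ 2)
    scCDF_cont.continuousOn this
  rw [← hFu, tLoc_scCDF hu]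
  exact ⟨hu, rfl⟩

lemma tLoc_continuousAt {y : ℝ} (hy : y ∈ Set.Ioo (-2 : ℝ) 2) :
    ContinuousAt tLoc' (scCDF' y) := by
  rw [Metric.continuousAt_iff]
  intro ε hε
  set ε' := min (min ε (2 - y)) (y + 2) / 2 with hε'def
  have hε'pos : 0 < ε' := by
    have := hy.1; have := hy.2
    apply div_pos _ two_pos
    exact lt_min (lt_min hε (by linarith)) (by linarith)
  have hε'le : ε' ≤ ε := by
    have h1 : min (min ε (2 - y)) (y + 2) ≤ ε := le_trans (min_le_left _ _) (min_le_left _ _)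
    have := hε.le
    rw [hε'def]; linarith
  have hmem0 : y ∈ Set.Icc (-2:ℝ) 2 := ⟨hy.1.le, hy.2.le⟩
  have hmem1 : y - ε' ∈ Set.Icc (-2:ℝ) 2 := by
    constructor
    · have : min (min ε (2 - y)) (y + 2) ≤ y + 2 := min_le_right _ _
      rw [hε'def]; linarith
    · linarith [hy.2]
  have hmem2 : y + ε' ∈ Set.Icc (-2:ℝ) 2 := by
    constructor
    · linarith [hy.1]
    · have : min (min ε (2 - y)) (y + 2) ≤ 2 - y :=
        le_trans (min_le_left _ _) (min_le_right _ _)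
      rw [hε'def]; linarith
  have h1 : scCDF' (y - ε') < scCDF' y := scCDF_strictMonoOn hmem1 hmem0 (by linarith)
  have h2 : scCDF' y < scCDF' (y + ε') := scCDF_strictMonoOn hmem0 hmem2 (by linarith)
  refine ⟨min (scCDF' y - scCDF' (y - ε')) (scCDF' (y + ε') - scCDF' y),
    lt_min (by linarith) (by linarith), ?_⟩
  intro v hv
  rw [Real.dist_eq, abs_lt] at hv
  have hvl : scCDF' (y - ε') < v := by
    have := min_le_left (scCDF' y - scCDF' (y - ε')) (scCDF' (y + ε') - scCDF' y)
    linarith [hv.1]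
  have hvr : v < scCDF' (y + ε') := by
    have := min_le_right (scCDF' y - scCDF' (y - ε')) (scCDF' (y + ε') - scCDF' y)
    linarith [hv.2]
  have h0v : 0 ≤ v := by
    have : scCDF' (-2) ≤ scCDF' (y - ε') := scCDF_mono hmem1.1
    rw [scCDF_neg_two] at this; linarith
  have hv2 : v ≤ scCDF' 2 := le_trans hvr.le (scCDF_mono hmem2.2)
  obtain ⟨hmem, hFv⟩ := scCDF_inv_spec h0v hv2
  rw [Real.dist_eq, tLoc_scCDF hmem0, abs_lt]
  have hl : y - ε' < tLoc' v := by
    by_contra h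
    push_neg at h
    have := scCDF_mono h
    rw [hFv] at this; linarith
  have hr : tLoc' v < y + ε' := by
    by_contra h
    push_neg at h
    have := scCDF_mono h
    rw [hFv] at this; linarith
  constructor <;> [linarith; linarith]

lemma tLoc_hasDerivAt {y : ℝ} (hy : y ∈ Set.Ioo (-2 : ℝ) 2) :
    HasDerivAt tLoc' (scF y)⁻¹ (scCDF' y) := by
  have hmem0 : y ∈ Set.Icc (-2:ℝ) 2 := ⟨hy.1.le, hy.2.le⟩
  have hgy : tLoc' (scCDF' y) = y := tLoc_scCDF hmem0
  have hF : HasDerivAt scCDF' (scF y) (tLoc' (scCDF' y)) := by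
    rw [hgy]; exact scCDF_hasDerivAt y
  have hfg : ∀ᶠ v in nhds (scCDF' y), scCDF' (tLoc' v) = v := by
    have hI : Set.Ioo (0 : ℝ) (scCDF' 2) ∈ nhds (scCDF' y) := by
      apply Ioo_mem_nhds
      · have := scCDF_strictMonoOn ⟨le_refl (-2:ℝ), by norm_num⟩ hmem0 hy.1
        rw [scCDF_neg_two] at this; exact this
      · exact scCDF_strictMonoOn hmem0 (by norm_num) hy.2
    filter_upwards [hI] with v hv
    exact (scCDF_inv_spec hv.1.le hv.2.le).2
  exact HasDerivAt.of_local_left_inverse (tLoc_continuousAt hy) hF (ne_of_gt (scF_pos hy)) hfg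


lemma scCDF_eq : scCDF = scCDF' := rfl
lemma tLoc_eq : tLoc = tLoc' := rfl

/-- **Asymptotics of the classical location at `i_n = nF(y) - x√(log n/(2π²))`.**
For `y ∈ (-2,2)` and `x ∈ ℝ`, with `i n = n F(y) - x √(log n / (2π²))`, one has
`t(i n / n) = y - x √(2/(4-y²)) · √(log n)/n + o(√(log n)/n)`, and consequently
`x_n := √((4 - t(i n / n)²)/2) · (y - t(i n / n)) / (√(log n)/n) → x`. -/
theorem statement14 (y : ℝ) (hy : y ∈ Set.Ioo (-2 : ℝ) 2) (x : ℝ)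
    (i : ℕ → ℝ)
    (hi : ∀ n : ℕ, i n = n * scCDF y - x * Real.sqrt (Real.log n / (2 * Real.pi ^ 2))) :
    ((fun n : ℕ => tLoc (i n / n) -
        (y - x * Real.sqrt (2 / (4 - y ^ 2)) * (Real.sqrt (Real.log n) / n)))
      =o[Filter.atTop] (fun n : ℕ => Real.sqrt (Real.log n) / n)) ∧
    Filter.Tendsto (fun n : ℕ =>
        Real.sqrt ((4 - tLoc (i n / n) ^ 2) / 2) * (y - tLoc (i n / n)) /
          (Real.sqrt (Real.log n) / n))
      Filter.atTop (nhds x) := by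
  rw [tLoc_eq]
  have hIcc : y ∈ Set.Icc (-2:ℝ) 2 := ⟨hy.1.le, hy.2.le⟩
  have h4 : (0:ℝ) < 4 - y ^ 2 := by nlinarith [hy.1, hy.2]
  have hsqrt2 : Real.sqrt 2 * Real.sqrt 2 = 2 := Real.mul_self_sqrt (by norm_num)
  have hsqrt2pos : (0:ℝ) < Real.sqrt 2 := Real.sqrt_pos.2 (by norm_num)
  have hs4 : (0:ℝ) < Real.sqrt (4 - y^2) := Real.sqrt_pos.2 h4
  have hpi : (0:ℝ) < Real.pi := Real.pi_pos
  set a := scCDF' y with ha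
  set s : ℕ → ℝ := fun n => Real.sqrt (Real.log n) / n with hs
  set k : ℝ := x / (Real.sqrt 2 * Real.pi) with hk
  set d : ℝ := (scF y)⁻¹ with hd
  set c : ℝ := x * Real.sqrt (2 / (4 - y ^ 2)) with hc
  set v : ℕ → ℝ := fun n => i n / n with hv
  -- identity c = k * d
  have hcd : c = k * d := by
    rw [hc, hk, hd]
    unfold scF
    rw [Real.sqrt_div (by norm_num : (0:ℝ) ≤ 2)]
    field_simp
    linear_combination x * hsqrt2
  -- sqrt split
  have hsplit : ∀ n : ℕ, Real.sqrt (Real.log n / (2 * Real.pi ^ 2)) =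
      Real.sqrt (Real.log n) / (Real.sqrt 2 * Real.pi) := by
    intro n
    rw [Real.sqrt_div (Real.log_natCast_nonneg n), Real.sqrt_mul (by norm_num : (0:ℝ) ≤ 2),
      Real.sqrt_sq hpi.le]
  have hva : ∀ n : ℕ, 1 ≤ n → v n - a = -k * s n := by
    intro n hn
    have hn0 : (n:ℝ) ≠ 0 := Nat.cast_ne_zero.2 (by omega)
    have : v n = i n / n := rfl
    rw [this, hi n, hsplit n, scCDF_eq, hs, hk]
    field_simp
    ring
  -- s tends to 0
  have hlogdiv : Tendsto (fun n : ℕ => Real.log n / n) atTop (nhds 0) :=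
    (Real.isLittleO_log_id_atTop.comp_tendsto
      tendsto_natCast_atTop_atTop).tendsto_div_nhds_zero
  have hinv : Tendsto (fun n : ℕ => ((n:ℝ))⁻¹) atTop (nhds 0) :=
    tendsto_inv_atTop_nhds_zero_nat
  have hlogsq : Tendsto (fun n : ℕ => Real.log n / (n:ℝ)^2) atTop (nhds 0) := by
    have := hlogdiv.mul hinv
    rw [mul_zero] at this
    apply this.congr
    intro n
    rw [pow_two]
    rw [div_mul_eq_div_div, div_div]
    ring_nf
  have hs0 : Tendsto s atTop (nhds 0) := by
    have h1 : Tendsto (fun n : ℕ => Real.sqrt (Real.log n / (n:ℝ)^2)) atTop (nhds 0) := by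
      have := hlogsq.sqrt
      rwa [Real.sqrt_zero] at this
    apply h1.congr
    intro n
    rw [Real.sqrt_div (Real.log_natCast_nonneg n), Real.sqrt_sq (Nat.cast_nonneg n)]
  have hvtend : Tendsto v atTop (nhds a) := by
    have h1 : Tendsto (fun n : ℕ => a + -k * s n) atTop (nhds a) := by
      have := (hs0.const_mul (-k))
      rw [mul_zero] at this
      simpa using tendsto_const_nhds.add this
    apply h1.congr'
    filter_upwards [eventually_ge_atTop 1] with n hn
    have := hva n hn
    linarith [this]
  -- the little-o from differentiability
  have hder : HasDerivAt tLoc' d a := tLoc_hasDerivAt hy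
  have hlo := hasDerivAt_iff_isLittleO.1 hder
  rw [show tLoc' a = y from tLoc_scCDF hIcc] at hlo
  have hcomp := hlo.comp_tendsto hvtend
  have hOB : (fun n : ℕ => v n - a) =O[atTop] s := by
    have h1 : (fun n : ℕ => -k * s n) =O[atTop] s := isBigO_const_mul_self (-k) s atTop
    apply h1.congr'
    · filter_upwards [eventually_ge_atTop 1] with n hn
      exact (hva n hn).symm
    · exact EventuallyEq.rfl
  have hmain : (fun n : ℕ => tLoc' (v n) - (y - c * s n)) =o[atTop] s := by
    have h2 : (fun n : ℕ => tLoc' (v n) - y - (v n - a) • d) =o[atTop] s :=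
      hcomp.trans_isBigO hOB
    apply h2.congr' _ EventuallyEq.rfl
    filter_upwards [eventually_ge_atTop 1] with n hn
    rw [smul_eq_mul, hva n hn, hcd]
    ring
  refine ⟨hmain, ?_⟩
  -- part 2
  set t : ℕ → ℝ := fun n => tLoc' (v n) with ht
  have hdiv : Tendsto (fun n => (t n - (y - c * s n)) / s n) atTop (nhds 0) :=
    hmain.tendsto_div_nhds_zero
  have hty : Tendsto t atTop (nhds y) := by
    have h2 : Tendsto (fun n => t n - (y - c * s n)) atTop (nhds 0) :=
      hmain.trans_tendsto hs0
    have h3 : Tendsto (fun n : ℕ => y - c * s n) atTop (nhds y) := by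
      have := hs0.const_mul c
      rw [mul_zero] at this
      simpa using tendsto_const_nhds.sub this
    have := h2.add h3
    rw [zero_add] at this
    apply this.congr
    intro n; ring
  have hsne : ∀ᶠ n : ℕ in atTop, s n ≠ 0 := by
    filter_upwards [eventually_ge_atTop 2] with n hn
    have hlogpos : 0 < Real.log n := Real.log_pos (by exact_mod_cast hn)
    have hnpos : (0:ℝ) < n := by positivity
    exact ne_of_gt (div_pos (Real.sqrt_pos.2 hlogpos) hnpos)
  have hratio : Tendsto (fun n => (y - t n) / s n) atTop (nhds c) := by
    have key : Tendsto (fun n => c - (t n - (y - c * s n)) / s n) atTop (nhds c) := by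
      simpa using tendsto_const_nhds.sub hdiv
    apply key.congr'
    filter_upwards [hsne] with n hn
    field_simp
    ring
  have hsq : Tendsto (fun n => Real.sqrt ((4 - t n ^ 2) / 2)) atTop
      (nhds (Real.sqrt ((4 - y ^ 2) / 2))) :=
    ((tendsto_const_nhds.sub (hty.pow 2)).div_const 2).sqrt
  have hval : Real.sqrt ((4 - y ^ 2) / 2) * c = x := by
    rw [hc, Real.sqrt_div h4.le, Real.sqrt_div (by norm_num : (0:ℝ) ≤ 2)]
    field_simp
  have hfin := hsq.mul hratio
  rw [hval] at hfin
  apply hfin.congr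
  intro n
  rw [mul_div_assoc]
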